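/- (Lemma 2) For all 1 ≤ k ≤ j < i ≤ d one has t_k^* a_i^{(j+1)} = 0, a_i^{(j+1)} t_k = 0, t_k^* (a_i^{(j+1)})^* = 0, and (a_i^{(j+1)})^* t_k = 0. -/
import Mathlib

private lemma mul_sq_zero_aux {A : Type*} [CStarAlgebra A] [PartialOrder A] [StarOrderedRing A]
    {x T : A} (hT : 0 ≤ T) (h : x * T ^ 2 = 0) : x * T = 0 := by
  have hTsa : star T = T := (IsSelfAdjoint.of_nonneg hT).star_eq
  have key : star (T * star x) * (T * star x) = 0 := by
    calc star (T * star x) * (T * star x) = x * T ^ 2 * star x := by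
          simp [star_mul, hTsa, sq, mul_assoc]
      _ = 0 := by rw [h, zero_mul]
  have h2 : T * star x = 0 := CStarRing.star_mul_self_eq_zero_iff _ |>.mp key
  calc x * T = star (star T * star x) := by simp [star_mul]
    _ = star (T * star x) := by rw [hTsa]
    _ = 0 := by rw [h2, star_zero]

/-- **Lemma 2.** For `1 ≤ k ≤ j < i ≤ d`: `tₖ* aᵢ⁽ʲ⁺¹⁾ = 0`,
`aᵢ⁽ʲ⁺¹⁾ tₖ = 0`, `tₖ* (aᵢ⁽ʲ⁺¹⁾)* = 0`, and `(aᵢ⁽ʲ⁺¹⁾)* tₖ = 0`. -/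
theorem t_star_a_lemma2 {A : Type*} [CStarAlgebra A] [PartialOrder A] [StarOrderedRing A]
    {d : ℕ} (hd : 0 < d) {μ : ℝ} (hμ₁ : -1 < μ) (hμ₂ : μ < 1)
    (t T P : ℕ → A) (a : ℕ → ℕ → A)
    (rel1 : ∀ i j, 1 ≤ i → i ≤ d → 1 ≤ j → j ≤ d → i ≠ j → star (t i) * t j = 0)
    (rel2 : ∀ i, 1 ≤ i → i ≤ d →
      star (t i) * t i = 1 - ∑ k ∈ Finset.Ico 1 i, t k * star (t k))
    (rel3 : ∀ i j, 1 ≤ i → i < j → j ≤ d → t j * t i = 0)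
    (hP : ∀ j, P j = 1 - ∑ k ∈ Finset.Icc 1 j, t k * star (t k))
    (hTpos : ∀ i, 1 ≤ i → i ≤ d → 0 ≤ T i)
    (hTsq : ∀ i, 1 ≤ i → i ≤ d →
      HasSum (fun n : ℕ => μ ^ (2 * n) • ((t i) ^ (n + 1) * star ((t i) ^ (n + 1))))
        (T i ^ 2))
    (haii : ∀ i, 1 ≤ i → i ≤ d → a i i = T i * t i)
    (haij : ∀ i j, 1 ≤ j → j < i → i ≤ d →
      HasSum (fun n : ℕ => μ ^ n • ((t j) ^ n * a i (j + 1) * star ((t j) ^ n)))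
        (a i j)) :
    ∀ i j k, 1 ≤ k → k ≤ j → j < i → i ≤ d →
      star (t k) * a i (j + 1) = 0 ∧ a i (j + 1) * t k = 0 ∧
      star (t k) * star (a i (j + 1)) = 0 ∧ star (a i (j + 1)) * t k = 0 := by
  suffices H : ∀ n i j k, i = j + 1 + n → 1 ≤ k → k ≤ j → j < i → i ≤ d →
      star (t k) * a i (j + 1) = 0 ∧ a i (j + 1) * t k = 0 ∧
      star (t k) * star (a i (j + 1)) = 0 ∧ star (a i (j + 1)) * t k = 0 by
    intro i j k hk hkj hji hid
    exact H (i - j - 1) i j k (by omega) hk hkj hji hid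
  intro n
  induction n with
  | zero =>
    intro i j k hij hk hkj hji hid
    have hji' : j + 1 = i := by omega
    have hki : k ≠ i := by omega
    have hkd : k ≤ d := by omega
    have hi1 : 1 ≤ i := by omega
    subst hji'
    rw [haii _ hi1 hid]
    have hsum := hTsq (j + 1) hi1 hid
    have h1 : HasSum (fun m : ℕ =>
        star (t k) * (μ ^ (2 * m) • (t (j+1) ^ (m + 1) * star (t (j+1) ^ (m + 1)))))
        (star (t k) * T (j+1) ^ 2) := hsum.mul_left _
    have hro : star (t k) * t (j+1) = 0 := rel1 k (j+1) hk hkd hi1 hid hki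
    have hzero : (fun m : ℕ =>
        star (t k) * (μ ^ (2 * m) • (t (j+1) ^ (m + 1) * star (t (j+1) ^ (m + 1)))))
        = fun _ => (0 : A) := by
      funext m
      have hL : star (t k) * t (j+1) ^ (m + 1) = 0 := by
        rw [pow_succ', ← mul_assoc, hro, zero_mul]
      rw [mul_smul_comm]
      simp only [← mul_assoc]
      rw [hL, zero_mul, smul_zero]
    rw [hzero] at h1
    have hTk2 : star (t k) * T (j+1) ^ 2 = 0 := h1.unique hasSum_zero
    have hTk : star (t k) * T (j+1) = 0 := mul_sq_zero_aux (hTpos _ hi1 hid) hTk2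
    have hTk' : T (j+1) * t k = 0 := by
      have := congrArg star hTk
      rwa [star_mul, star_star, (IsSelfAdjoint.of_nonneg (hTpos _ hi1 hid)).star_eq,
        star_zero] at this
    have htik : t (j+1) * t k = 0 := rel3 k (j+1) hk (by omega) hid
    refine ⟨?_, ?_, ?_, ?_⟩
    · rw [← mul_assoc, hTk, zero_mul]
    · rw [mul_assoc, htik, mul_zero]
    · rw [star_mul, ← mul_assoc, ← star_mul, htik, star_zero, zero_mul]
    · rw [star_mul, (IsSelfAdjoint.of_nonneg (hTpos _ hi1 hid)).star_eq,
        mul_assoc, hTk', mul_zero]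
  | succ n IH =>
    intro i j k hij hk hkj hji hid
    have hj1i : j + 1 < i := by omega
    have hj1d : j + 1 ≤ d := by omega
    obtain ⟨ih1, ih2, ih3, ih4⟩ := IH i (j + 1) k (by omega) hk (by omega) hj1i hid
    have hsum := haij i (j + 1) (by omega) hj1i hid
    have hstar := hsum.star
    have hro : star (t k) * t (j+1) = 0 :=
      rel1 k (j+1) hk (by omega) (by omega) hj1d (by omega)
    have hro' : star (t (j+1)) * t k = 0 :=
      rel1 (j+1) k (by omega) hj1d hk (by omega) (by omega)
    have hL : ∀ m : ℕ, star (t k) * t (j+1) ^ (m + 1) = 0 := by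
      intro m; rw [pow_succ', ← mul_assoc, hro, zero_mul]
    have hR : ∀ m : ℕ, star (t (j+1) ^ (m + 1)) * t k = 0 := by
      intro m; rw [star_pow, pow_succ, mul_assoc, hro', mul_zero]
    refine ⟨?_, ?_, ?_, ?_⟩
    · have h1 := hsum.mul_left (star (t k))
      have hz : (fun m : ℕ => star (t k) *
          (μ ^ m • (t (j+1) ^ m * a i (j + 1 + 1) * star (t (j+1) ^ m))))
          = fun _ => (0 : A) := by
        funext m
        rw [mul_smul_comm]
        cases m with
        | zero => simp [ih1]
        | succ m =>
          simp only [← mul_assoc]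
          rw [hL m, zero_mul, zero_mul, smul_zero]
      rw [hz] at h1
      exact h1.unique hasSum_zero
    · have h1 := hsum.mul_right (t k)
      have hz : (fun m : ℕ =>
          (μ ^ m • (t (j+1) ^ m * a i (j + 1 + 1) * star (t (j+1) ^ m))) * t k)
          = fun _ => (0 : A) := by
        funext m
        rw [smul_mul_assoc]
        cases m with
        | zero => simp [ih2]
        | succ m =>
          simp only [mul_assoc]
          rw [hR m, mul_zero, mul_zero, smul_zero]
      rw [hz] at h1
      exact h1.unique hasSum_zero
    · have h1 := hstar.mul_left (star (t k))
      have hz : (fun m : ℕ => star (t k) *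
          star (μ ^ m • (t (j+1) ^ m * a i (j + 1 + 1) * star (t (j+1) ^ m))))
          = fun _ => (0 : A) := by
        funext m
        rw [star_smul, star_trivial (μ ^ m), star_mul, star_mul, star_star,
          mul_smul_comm]
        cases m with
        | zero => simp [ih3]
        | succ m =>
          simp only [← mul_assoc]
          rw [hL m, zero_mul, zero_mul, smul_zero]
      rw [hz] at h1
      exact h1.unique hasSum_zero
    · have h1 := hstar.mul_right (t k)
      have hz : (fun m : ℕ =>
          star (μ ^ m • (t (j+1) ^ m * a i (j + 1 + 1) * star (t (j+1) ^ m))) * t k)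
          = fun _ => (0 : A) := by
        funext m
        rw [star_smul, star_trivial (μ ^ m), star_mul, star_mul, star_star,
          smul_mul_assoc]
        cases m with
        | zero => simp [ih4]
        | succ m =>
          simp only [mul_assoc]
          rw [hR m, mul_zero, mul_zero, smul_zero]
      rw [hz] at h1
      exact h1.unique hasSum_zero
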